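/- Let p > q ≥ 2 be integers and let r, s be integers with r·p + s·q = 1. Then for every integer n, the normal closure of the single element μ_n = x·a^{−n} in G is the whole group G; that is, each μ_n is a killer (normal generator) of the (p,q)-torus knot group. -/

import Mathlib

/-- The single relator `u^p * v^{-q}` of the `(p,q)`-torus knot group, in the free
group on two generators (`FreeGroup.of 0 = u`, `FreeGroup.of 1 = v`). -/
def torusRels (p q : ℤ) : Set (FreeGroup (Fin 2)) :=
  {FreeGroup.of 0 ^ p * FreeGroup.of 1 ^ (-q)}

/-- The `(p,q)`-torus knot group `⟨u, v ∣ u^p = v^q⟩`. -/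
abbrev TorusKnotGroup (p q : ℤ) := PresentedGroup (torusRels p q)

/-- The generator `u`. -/
def u (p q : ℤ) : TorusKnotGroup p q := PresentedGroup.of 0

/-- The generator `v`. -/
def v (p q : ℤ) : TorusKnotGroup p q := PresentedGroup.of 1

/-- The element `x = u^s * v^r`. -/
def xelt (p q r s : ℤ) : TorusKnotGroup p q := u p q ^ s * v p q ^ r

/-- The element `a = u * x^{-q}`. -/
def aelt (p q r s : ℤ) : TorusKnotGroup p q := u p q * xelt p q r s ^ (-q)

/-- The element `μ_n = x * a^{-n}`. -/
def μ (p q r s n : ℤ) : TorusKnotGroup p q := xelt p q r s * aelt p q r s ^ (-n)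

theorem torus_mu_is_killer (p q r s : ℤ) (hpq : q < p) (hq : 2 ≤ q)
    (hrs : r * p + s * q = 1) (n : ℤ) :
    Subgroup.normalClosure ({μ p q r s n} : Set (TorusKnotGroup p q)) = ⊤ := by
  set N := Subgroup.normalClosure ({μ p q r s n} : Set (TorusKnotGroup p q)) with hN
  haveI : N.Normal := Subgroup.normalClosure_normal
  set π := QuotientGroup.mk' N with hπ
  -- the relator holds in the presented group
  have hrel : (u p q) ^ p * (v p q) ^ (-q) = 1 := by
    have hmem : (FreeGroup.of 0 ^ p * FreeGroup.of 1 ^ (-q) : FreeGroup (Fin 2))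
        ∈ Subgroup.normalClosure (torusRels p q) :=
      Subgroup.subset_normalClosure rfl
    have : PresentedGroup.mk (torusRels p q)
        (FreeGroup.of 0 ^ p * FreeGroup.of 1 ^ (-q)) = 1 :=
      (QuotientGroup.eq_one_iff _).2 hmem
    simpa [map_mul, map_zpow, u, v, PresentedGroup.of] using this
  set A := π (aelt p q r s) with hA
  set X := π (xelt p q r s) with hXdef
  set U := π (u p q) with hUdef
  set V := π (v p q) with hVdef
  have hμ1 : π (μ p q r s n) = 1 :=
    (QuotientGroup.eq_one_iff _).2 (Subgroup.subset_normalClosure rfl)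
  have hX : X = A ^ n := by
    have h : X * A ^ (-n) = 1 := by
      simpa [μ, map_mul, map_zpow] using hμ1
    rw [zpow_neg] at h
    exact mul_inv_eq_one.mp h
  have hU : U = A ^ (n * q + 1) := by
    have hA' : A = U * X ^ (-q) := by simp [hA, aelt, map_mul, map_zpow, hXdef, hUdef]
    have hU' : U = A * X ^ q := by rw [hA']; group
    rw [hX] at hU'
    rw [hU']; group
  have hVq : V ^ q = A ^ ((n * q + 1) * p) := by
    have h : U ^ p * V ^ (-q) = 1 := by
      simpa [map_mul, map_zpow] using congrArg π hrel
    rw [zpow_neg] at h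
    have h2 : U ^ p = V ^ q := mul_inv_eq_one.mp h
    rw [← h2, hU, ← zpow_mul]
  have hVr : V ^ r = A ^ (n - (n * q + 1) * s) := by
    have hx' : X = U ^ s * V ^ r := by simp [hXdef, xelt, map_mul, map_zpow, hUdef, hVdef]
    have : V ^ r = U ^ (-s) * X := by rw [hx']; group
    rw [this, hU, hX]; group
  have hV : V = A ^ (p * n) := by
    have : V = V ^ (r * p + q * s) := by
      rw [show r * p + q * s = 1 by linarith]; exact (zpow_one V).symm
    rw [this, zpow_add, zpow_mul, zpow_mul, hVr, hVq, ← zpow_mul, ← zpow_mul, ← zpow_add]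
    congr 1; ring
  have hAp : A ^ p = 1 := by
    have h1 : A ^ ((n * q + 1) * p) = A ^ (p * n * q) := by
      rw [← hVq, hV, ← zpow_mul]
    have : A ^ p = A ^ ((n * q + 1) * p) * (A ^ (p * n * q))⁻¹ := by
      rw [← zpow_neg, ← zpow_add]; congr 1; ring
    rw [this, h1, mul_inv_cancel]
  have hAs : A ^ s = 1 := by
    have hx' : X = U ^ s * V ^ r := by simp [hXdef, xelt, map_mul, map_zpow, hUdef, hVdef]
    have h1 : A ^ n = A ^ ((n * q + 1) * s + (p * n) * r) := by
      rw [← hX, hx', hU, hV, ← zpow_mul, ← zpow_mul, ← zpow_add]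
    have : A ^ s = A ^ ((n * q + 1) * s + (p * n) * r) * (A ^ n)⁻¹ := by
      rw [← zpow_neg, ← zpow_add]; congr 1; linear_combination (-n) * hrs
    rw [this, ← h1, mul_inv_cancel]
  have hA1 : A = 1 := by
    have : A = A ^ (p * r + s * q) := by
      rw [show p * r + s * q = 1 by linarith]; group
    rw [this, zpow_add, zpow_mul, zpow_mul, hAp, hAs, one_zpow, one_zpow, one_mul]
  have hU1 : U = 1 := by rw [hU, hA1, one_zpow]
  have hV1 : V = 1 := by rw [hV, hA1, one_zpow]
  have hu : u p q ∈ N := (QuotientGroup.eq_one_iff _).1 hU1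
  have hv : v p q ∈ N := (QuotientGroup.eq_one_iff _).1 hV1
  rw [eq_top_iff]
  intro g _
  refine PresentedGroup.generated_by _ N (fun j => ?_) g
  fin_cases j
  · exact hu
  · exact hv
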